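/- Let n ≥ 1, let ≼ be a reflexive and transitive relation (a preposet) on [n] = {1,…,n}, and let f : [n] → ℕ be weakly increasing with respect to the usual order on [n]. Then the following are equivalent: (a) for all x, y ∈ [n], x ≼ y implies f(x) ≤ f(y); (b) for all x, y ∈ [n] with y < x and x ≼ y, f is constant on the interval {y, y+1, …, x}. -/
import Mathlib


/-- Coordinate form of the identity `C_Q ∩ C_W = C_{N_{w,Q}}`: if `≼` (given by `r`) is a
preposet on `[n]` and `f : [n] → ℕ` is weakly increasing, then `f` is order-preserving
for `≼` if and only if `f` is constant on the interval `{y,…,x}` for every unnatural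
relation `x ≼ y` with `y < x`. -/
theorem natural_composition_in_closure_iff
    (n : ℕ) (hn : 1 ≤ n) (r : Fin n → Fin n → Prop)
    (hrefl : ∀ x, r x x) (htrans : ∀ x y z, r x y → r y z → r x z)
    (f : Fin n → ℕ) (hf : Monotone f) :
    (∀ x y, r x y → f x ≤ f y) ↔
    (∀ x y, y < x → r x y → ∀ u, y ≤ u → u ≤ x → f u = f y) := by
  constructor
  · intro h x y hyx hr u hyu hux
    exact le_antisymm ((hf hux).trans (h x y hr)) (hf hyu)
  · intro h x y hr
    rcases le_or_gt x y with hxy | hyx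
    · exact hf hxy
    · exact (h x y hyx hr x hyx.le le_rfl).le
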